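/- Let c : ℕ → ℝ be a sequence with 0 ≤ c(m) ≤ 2n·Λ(m) for all m ≥ 2, where Λ is the von Mangoldt function and n ≥ 1 is an integer. Suppose L is a positive differentiable function on (1, ∞) with −L'(s)/L(s) = Σ_{m≥2} c(m)/m^s for all s > 1 (the series converging). Then for all 0 < a < b, L(1+a)/L(1+b) ≤ (ζ(1+a)/ζ(1+b))^{2n}. -/

import Mathlib

open Real

/-- The Riemann zeta function on real arguments s > 1, given by its Dirichlet series. -/
noncomputable def realZeta (s : ℝ) : ℝ := ∑' n : ℕ, ((n : ℝ) + 1) ^ (-s)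

lemma realZeta_summable {s : ℝ} (hs : 1 < s) :
    Summable (fun n : ℕ => ((n : ℝ) + 1) ^ (-s)) := by
  have := (Real.summable_one_div_nat_rpow (p := s)).2 hs
  have h2 := (summable_nat_add_iff 1).2 this
  refine h2.congr fun n => ?_
  rw [one_div, ← Real.rpow_neg (by positivity)]
  push_cast
  ring_nf

lemma realZeta_pos {s : ℝ} (hs : 1 < s) : 0 < realZeta s := by
  refine Summable.tsum_pos (realZeta_summable hs) (fun n => by positivity) 0 (by positivity)

lemma riemannZeta_real {s : ℝ} (hs : 1 < s) :
    riemannZeta s = (realZeta s : ℂ) := by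
  rw [zeta_eq_tsum_one_div_nat_add_one_cpow (by simpa using hs), realZeta]
  rw [Complex.ofReal_tsum]
  congr 1
  funext n
  rw [show ((n : ℂ) + 1) = ((((n : ℝ)) + 1 : ℝ) : ℂ) by push_cast; ring,
    ← Complex.ofReal_cpow (by positivity)]
  rw [Real.rpow_neg (by positivity), Complex.ofReal_inv, one_div]

lemma realZeta_hasDerivAt {s : ℝ} (hs : 1 < s) :
    HasDerivAt realZeta (deriv riemannZeta s).re s := by
  have hne : (s : ℂ) ≠ 1 := by
    simp only [ne_eq, ← Complex.ofReal_one, Complex.ofReal_inj]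
    linarith
  have h := (differentiableAt_riemannZeta hne).hasDerivAt.real_of_complex
  refine h.congr_of_eventuallyEq ?_
  filter_upwards [eventually_gt_nhds hs] with x hx
  rw [riemannZeta_real hx, Complex.ofReal_re]

open ArithmeticFunction in
lemma vm_term_re {s : ℝ} (n : ℕ) :
    (LSeries.term (fun m => (Λ m : ℂ)) (s : ℂ) n).re = Λ n / (n : ℝ) ^ s := by
  rcases eq_or_ne n 0 with rfl | hn
  · simp [LSeries.term]
  · rw [LSeries.term_of_ne_zero hn]
    have hpos : (0:ℝ) < (n : ℝ) := by positivity
    rw [show ((n : ℕ) : ℂ) ^ (s : ℂ) = (((n : ℝ) ^ s : ℝ) : ℂ) by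
      rw [show ((n : ℕ) : ℂ) = (((n : ℝ) : ℝ) : ℂ) by push_cast; ring,
        ← Complex.ofReal_cpow hpos.le]]
    rw [← Complex.ofReal_div, Complex.ofReal_re]

open ArithmeticFunction in
lemma vm_summable {s : ℝ} (hs : 1 < s) :
    Summable (fun m : ℕ => Λ m / (m : ℝ) ^ s) := by
  have h := LSeriesSummable_vonMangoldt (s := (s : ℂ)) (by simpa using hs)
  have := (Complex.hasSum_re h.hasSum).summable
  exact this.congr fun n => vm_term_re n

open ArithmeticFunction in
lemma realZeta_logderiv {s : ℝ} (hs : 1 < s) :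
    -deriv realZeta s / realZeta s = ∑' m : ℕ, Λ (m + 2) / ((m : ℝ) + 2) ^ s := by
  have hLS := LSeries_vonMangoldt_eq_deriv_riemannZeta_div (s := (s : ℂ)) (by simpa using hs)
  have hsum := LSeriesSummable_vonMangoldt (s := (s : ℂ)) (by simpa using hs)
  have hre : (LSeries (fun m => (Λ m : ℂ)) s).re = ∑' m : ℕ, Λ m / (m : ℝ) ^ s := by
    rw [LSeries, Complex.re_tsum hsum]
    exact tsum_congr fun n => vm_term_re n
  have hζ : riemannZeta s = (realZeta s : ℂ) := riemannZeta_real hs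
  have hd : deriv realZeta s = (deriv riemannZeta s).re := (realZeta_hasDerivAt hs).deriv
  have hz : (realZeta s : ℂ) ≠ 0 := by
    simpa using (realZeta_pos hs).ne'
  have h2 : (LSeries (fun m => (Λ m : ℂ)) s).re
      = (-(deriv riemannZeta s).re) / realZeta s := by
    rw [hLS, hζ, Complex.div_ofReal_re, Complex.neg_re]
  have hfull : -deriv realZeta s / realZeta s = ∑' m : ℕ, Λ m / (m : ℝ) ^ s := by
    rw [hd, ← hre, h2]
  rw [hfull]
  have hS : Summable (fun m : ℕ => Λ m / (m : ℝ) ^ s) := vm_summable hs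
  rw [hS.tsum_eq_zero_add, ((summable_nat_add_iff 1).2 hS).tsum_eq_zero_add]
  simp only [ArithmeticFunction.vonMangoldt_apply_one, Nat.cast_zero, Nat.cast_one,
    Nat.cast_add, ArithmeticFunction.map_zero, zero_div, zero_add]
  exact tsum_congr fun n => by rw [show n + 1 + 1 = n + 2 from rfl]; ring_nf

lemma dirichlet_contOn (d : ℕ → ℝ) (hd : ∀ m, 0 ≤ d m) {a : ℝ} (b : ℝ) (ha : 0 < a)
    (hsum : Summable fun m : ℕ => d m / ((m : ℝ) + 2) ^ (1 + a)) :
    ContinuousOn (fun t => ∑' m : ℕ, d m / ((m : ℝ) + 2) ^ (1 + t)) (Set.Icc a b) := by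
  have hbase : ∀ m : ℕ, (1 : ℝ) ≤ (m : ℝ) + 2 := fun m => by
    have := Nat.cast_nonneg (α := ℝ) m; linarith
  have hbpos : ∀ m : ℕ, (0 : ℝ) < (m : ℝ) + 2 := fun m => by positivity
  set G : ℝ → ℝ := fun t => ∑' m : ℕ, d m / ((m : ℝ) + 2) ^ (1 + max t a) with hG
  have hcontG : Continuous G := by
    refine continuous_tsum (fun m => ?_) hsum (fun m t => ?_)
    · have : (fun t => d m / ((m : ℝ) + 2) ^ (1 + max t a))
          = fun t => d m / Real.exp ((1 + max t a) * Real.log ((m : ℝ) + 2)) := by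
        funext t; rw [Real.rpow_def_of_pos (hbpos m), mul_comm]
      rw [this]
      exact continuous_const.div
        (Real.continuous_exp.comp ((continuous_const.add (continuous_id.max continuous_const)).mul
          continuous_const)) (fun t => (Real.exp_pos _).ne')
    · have hnn : 0 ≤ d m / ((m : ℝ) + 2) ^ (1 + max t a) :=
        div_nonneg (hd m) (Real.rpow_pos_of_pos (hbpos m) _).le
      rw [Real.norm_eq_abs, abs_of_nonneg hnn]
      refine div_le_div_of_nonneg_left (hd m) (Real.rpow_pos_of_pos (hbpos m) _) ?_
      exact Real.rpow_le_rpow_of_exponent_le (hbase m) (by simp [le_max_right])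
  refine (hcontG.continuousOn).congr fun t ht => ?_
  simp only [hG]
  rw [max_eq_left ht.1]

lemma log_diff_eq_integral (f G : ℝ → ℝ) {a b : ℝ} (ha : 0 < a) (hab : a < b)
    (hpos : ∀ s, 1 < s → 0 < f s) (hdiff : ∀ s, 1 < s → DifferentiableAt ℝ f s)
    (hG : ∀ t ∈ Set.Icc a b, -deriv f (1 + t) / f (1 + t) = G t)
    (hGcont : ContinuousOn G (Set.Icc a b)) :
    Real.log (f (1 + a)) - Real.log (f (1 + b)) = ∫ t in a..b, G t := by
  have huIcc : Set.uIcc a b = Set.Icc a b := Set.uIcc_of_le hab.le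
  have key : ∀ t ∈ Set.uIcc a b,
      HasDerivAt (fun u => Real.log (f (1 + u))) (-G t) t := by
    intro t ht
    rw [huIcc] at ht
    have h1t : 1 < 1 + t := by linarith [ht.1]
    have h1 : HasDerivAt (fun u => f (1 + u)) (deriv f (1 + t)) t := by
      have := ((hdiff _ h1t).hasDerivAt.comp t ((hasDerivAt_id t).const_add 1))
      simpa [Function.comp_def] using this
    have h2 := h1.log (hpos _ h1t).ne'
    have heq : deriv f (1 + t) / f (1 + t) = -G t := by
      rw [← hG t ht]; ring
    rwa [heq] at h2
  have hint : IntervalIntegrable (fun t => -G t) MeasureTheory.volume a b := by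
    apply ContinuousOn.intervalIntegrable
    rw [huIcc]; exact hGcont.neg
  have := intervalIntegral.integral_eq_sub_of_hasDerivAt key hint
  rw [intervalIntegral.integral_neg] at this
  linarith [this]

open ArithmeticFunction in
lemma vm_shift_summable {s : ℝ} (hs : 1 < s) :
    Summable (fun m : ℕ => Λ (m + 2) / ((m : ℝ) + 2) ^ s) := by
  refine ((summable_nat_add_iff 2).2 (vm_summable hs)).congr fun m => ?_
  push_cast
  ring_nf


/-- Abstract form of Lemma 2.3: if −L'/L has a Dirichlet series with coefficients
0 ≤ c(m) ≤ 2n·Λ(m), then L(1+a)/L(1+b) ≤ (ζ(1+a)/ζ(1+b))^(2n) for 0 < a < b. -/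
theorem stmt_11 (n : ℕ) (hn : 1 ≤ n) (c : ℕ → ℝ)
    (hc : ∀ m : ℕ, 2 ≤ m → 0 ≤ c m ∧ c m ≤ 2 * n * ArithmeticFunction.vonMangoldt m)
    (L : ℝ → ℝ) (hLpos : ∀ s : ℝ, 1 < s → 0 < L s)
    (hLdiff : ∀ s : ℝ, 1 < s → DifferentiableAt ℝ L s)
    (hsum : ∀ s : ℝ, 1 < s → Summable (fun m : ℕ => c (m + 2) / ((m : ℝ) + 2) ^ s))
    (hseries : ∀ s : ℝ, 1 < s →
      -deriv L s / L s = ∑' m : ℕ, c (m + 2) / ((m : ℝ) + 2) ^ s)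
    (a b : ℝ) (ha : 0 < a) (hab : a < b) :
    L (1 + a) / L (1 + b) ≤ (realZeta (1 + a) / realZeta (1 + b)) ^ (2 * n) := by

  have h1a : (1 : ℝ) < 1 + a := by linarith
  have h1b : (1 : ℝ) < 1 + b := by linarith
  set Gc : ℝ → ℝ := fun t : ℝ => ∑' m : ℕ, c (m + 2) / ((m : ℝ) + 2) ^ (1 + t) with hGc
  set Gz : ℝ → ℝ := fun t : ℝ => ∑' m : ℕ, ArithmeticFunction.vonMangoldt (m + 2) / ((m : ℝ) + 2) ^ (1 + t) with hGz
  have hcnn : ∀ m : ℕ, 0 ≤ c (m + 2) := fun m => (hc (m + 2) (by omega)).1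
  have hGLcont : ContinuousOn Gc (Set.Icc a b) :=
    dirichlet_contOn _ hcnn b ha (hsum _ h1a)
  have hGZcont : ContinuousOn Gz (Set.Icc a b) :=
    dirichlet_contOn _ (fun m => ArithmeticFunction.vonMangoldt_nonneg) b ha (vm_shift_summable h1a)
  have hAL : Real.log (L (1 + a)) - Real.log (L (1 + b)) = ∫ t in a..b, Gc t :=
    log_diff_eq_integral L Gc ha hab hLpos hLdiff
      (fun t ht => hseries (1 + t) (by linarith [ht.1])) hGLcont
  have hAZ : Real.log (realZeta (1 + a)) - Real.log (realZeta (1 + b))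
      = ∫ t in a..b, Gz t :=
    log_diff_eq_integral realZeta Gz ha hab (fun s hs => realZeta_pos hs)
      (fun s hs => (realZeta_hasDerivAt hs).differentiableAt)
      (fun t ht => realZeta_logderiv (by linarith [ht.1])) hGZcont
  have hpt : ∀ t ∈ Set.Icc a b, Gc t ≤ (2 * n : ℝ) * Gz t := by
    intro t ht
    have h1t : (1 : ℝ) < 1 + t := by linarith [ht.1]
    rw [hGc, hGz]
    simp only
    rw [← tsum_mul_left]
    refine Summable.tsum_le_tsum (fun m => ?_) (hsum _ h1t) ((vm_shift_summable h1t).mul_left _)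
    rw [← mul_div_assoc]
    have hden : (0:ℝ) < ((m:ℝ) + 2) ^ (1 + t) := Real.rpow_pos_of_pos (by positivity) _
    gcongr
    exact (hc (m + 2) (by omega)).2
  have hintGL : IntervalIntegrable Gc MeasureTheory.volume a b := by
    apply ContinuousOn.intervalIntegrable
    rwa [Set.uIcc_of_le hab.le]
  have hintGZ : IntervalIntegrable (fun t => (2 * n : ℝ) * Gz t) MeasureTheory.volume a b := by
    apply ContinuousOn.intervalIntegrable
    rw [Set.uIcc_of_le hab.le]
    exact continuousOn_const.mul hGZcont
  have hineq : (∫ t in a..b, Gc t) ≤ ∫ t in a..b, (2 * n : ℝ) * Gz t :=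
    intervalIntegral.integral_mono_on hab.le hintGL hintGZ hpt
  rw [intervalIntegral.integral_const_mul] at hineq
  have hAB : Real.log (L (1 + a)) - Real.log (L (1 + b))
      ≤ (2 * n : ℝ) * (Real.log (realZeta (1 + a)) - Real.log (realZeta (1 + b))) := by
    rw [hAL, hAZ]; exact hineq
  have hLeq : L (1 + a) / L (1 + b)
      = Real.exp (Real.log (L (1 + a)) - Real.log (L (1 + b))) := by
    rw [Real.exp_sub, Real.exp_log (hLpos _ h1a), Real.exp_log (hLpos _ h1b)]
  have hZeq : (realZeta (1 + a) / realZeta (1 + b)) ^ (2 * n)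
      = Real.exp ((2 * n : ℝ) *
        (Real.log (realZeta (1 + a)) - Real.log (realZeta (1 + b)))) := by
    rw [show ((2 * n : ℝ)) = ((2 * n : ℕ) : ℝ) by push_cast; ring, Real.exp_nat_mul,
      Real.exp_sub, Real.exp_log (realZeta_pos h1a), Real.exp_log (realZeta_pos h1b)]
  rw [hLeq, hZeq]
  exact Real.exp_le_exp.2 hAB
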